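/- Let M be a matroid possessing a circuit C and a cocircuit D with |C ∩ D| odd and at least 3. Then M has a minor with finite ground set of size 2·|C ∩ D| − 2 in which some set is simultaneously a circuit, a cocircuit, spanning, and cospanning. -/

import Mathlib

open Set

namespace Matroid

variable {α : Type*}

/-- A circuit of a matroid is a minimal dependent set. -/
def Circuit (M : Matroid α) (C : Set α) : Prop :=
  M.Dep C ∧ ∀ D, M.Dep D → D ⊆ C → D = C

/-- A cocircuit is a circuit of the dual matroid. -/
def Cocircuit (M : Matroid α) (D : Set α) : Prop := M✶.Circuit D

/-- The matroid obtained by deleting the set `D`. -/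
def delete' (M : Matroid α) (D : Set α) : Matroid α := M ↾ (M.E \ D)

/-- The matroid obtained by contracting the set `C`. -/
def contract' (M : Matroid α) (C : Set α) : Matroid α := ((M✶).delete' C)✶

/-- `N` is a minor of `M` if it is obtained from `M` by contracting a set `C`
and deleting a set `D`, where `C` and `D` are disjoint subsets of the ground set. -/
def IsMinor' (N M : Matroid α) : Prop :=
  ∃ C D, Disjoint C D ∧ C ∪ D ⊆ M.E ∧ N = (M.contract' C).delete' D

/-- A scrawl is a union of circuits. -/
def Scrawl (M : Matroid α) (W : Set α) : Prop :=
  ∃ S : Set (Set α), (∀ C ∈ S, M.Circuit C) ∧ W = ⋃₀ S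

/-- A matroid is tame if every circuit-cocircuit intersection is finite. -/
def Tame (M : Matroid α) : Prop :=
  ∀ C D, M.Circuit C → M.Cocircuit D → (C ∩ D).Finite

/-- A `k`-painting of a matroid: nonzero coefficients on each circuit and each
cocircuit such that each circuit-cocircuit pair is "orthogonal". -/
def IsPainting {k : Type*} [Field k] (M : Matroid α)
    (c : Set α → α → k) (d : Set α → α → k) : Prop :=
  (∀ C, M.Circuit C → ∀ e ∈ C, c C e ≠ 0) ∧
  (∀ D, M.Cocircuit D → ∀ e ∈ D, d D e ≠ 0) ∧
  (∀ C D, M.Circuit C → M.Cocircuit D →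
    (C ∩ D).Finite ∧ ∑ᶠ e ∈ C ∩ D, c C e * d D e = 0)

end Matroid

section Helpers

namespace Matroid

variable {α : Type*} {M : Matroid α} {B B' C D D₁ D₂ C₁ C₂ I P R S T X : Set α} {e f : α}

@[simp] lemma delete_ground' (M : Matroid α) (D : Set α) : (M.delete' D).E = M.E \ D := rfl

lemma delete_indep_iff' : (M.delete' D).Indep I ↔ M.Indep I ∧ I ⊆ M.E \ D :=
  restrict_indep_iff

@[simp] lemma contract_ground' (M : Matroid α) (C : Set α) : (M.contract' C).E = M.E \ C := rfl

lemma dual_contract' (M : Matroid α) (C : Set α) : (M.contract' C)✶ = M✶.delete' C :=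
  dual_dual _

lemma dual_delete' (M : Matroid α) (D : Set α) : (M.delete' D)✶ = M✶.contract' D := by
  show (M.delete' D)✶ = ((M✶✶).delete' D)✶
  rw [dual_dual]

lemma restrict_base_iff_spanning (hR : M.Spanning R) :
    (M ↾ R).IsBase B ↔ M.IsBase B ∧ B ⊆ R := by
  rw [isBase_restrict_iff hR.subset_ground]
  constructor
  · intro h
    refine ⟨h.indep.isBase_of_ground_subset_closure ?_, h.subset⟩
    rw [h.closure_eq_closure, hR.closure_eq]
  · rintro ⟨hB, hBR⟩
    exact hB.indep.isBasis_of_subset_of_subset_closure hBR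
      (by rw [hB.closure_eq]; exact hR.subset_ground)

lemma contract_base_iff' (hS : M.Indep S) :
    (M.contract' S).IsBase B ↔ Disjoint B S ∧ M.IsBase (B ∪ S) := by
  have hSE := hS.subset_ground
  have hsp : M✶.Spanning (M✶.E \ S) := (dual_coindep_iff.mpr hS).compl_spanning
  have hkey : ∀ Y : Set α, Y ⊆ M.E \ S → (M.E \ ((M.E \ S) \ Y) = Y ∪ S) := by
    intro Y hY
    rw [diff_diff_right, diff_diff_cancel_left hSE,
      inter_eq_self_of_subset_right (hY.trans diff_subset), union_comm]
  show ((M✶.delete' S)✶).IsBase B ↔ _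
  rw [dual_isBase_iff']
  show (M✶ ↾ (M✶.E \ S)).IsBase ((M✶.E \ S) \ B) ∧ B ⊆ M✶.E \ S ↔ _
  rw [restrict_base_iff_spanning hsp]
  rw [dual_ground]
  constructor
  · rintro ⟨⟨h1, -⟩, hBE⟩
    rw [dual_isBase_iff'] at h1
    rw [hkey B hBE] at h1
    exact ⟨(subset_diff.mp hBE).2, h1.1⟩
  · rintro ⟨hdj, hB⟩
    have hBE : B ⊆ M.E \ S := subset_diff.mpr ⟨subset_union_left.trans hB.subset_ground, hdj⟩
    refine ⟨⟨?_, diff_subset⟩, hBE⟩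
    rw [dual_isBase_iff']
    rw [hkey B hBE]
    exact ⟨hB, diff_subset.trans diff_subset⟩

lemma contract_indep_iff' (hS : M.Indep S) :
    (M.contract' S).Indep I ↔ Disjoint I S ∧ M.Indep (I ∪ S) := by
  constructor
  · intro hI
    obtain ⟨B, hB, hIB⟩ := hI.exists_isBase_superset
    rw [contract_base_iff' hS] at hB
    exact ⟨hB.1.mono_left hIB, hB.2.indep.subset (union_subset_union_left _ hIB)⟩
  · rintro ⟨hdj, hI⟩
    obtain ⟨B, hB, hIB⟩ := hI.exists_isBase_superset
    have hSB : S ⊆ B := subset_union_right.trans hIB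
    have hBbase : (M.contract' S).IsBase (B \ S) := by
      rw [contract_base_iff' hS]
      refine ⟨disjoint_sdiff_left, ?_⟩
      rwa [diff_union_self, union_eq_self_of_subset_right hSB]
    exact hBbase.indep.subset (subset_diff.mpr ⟨subset_union_left.trans hIB, hdj⟩)

lemma contract_dep_iff' (hS : M.Indep S) :
    (M.contract' S).Dep X ↔ X ⊆ M.E \ S ∧ ¬ M.Indep (X ∪ S) := by
  rw [dep_iff, contract_indep_iff' hS, contract_ground']
  constructor
  · rintro ⟨h1, h2⟩
    exact ⟨h2, fun h => h1 ⟨(subset_diff.mp h2).2, h⟩⟩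
  · rintro ⟨h1, h2⟩
    exact ⟨fun h => h2 h.2, h1⟩

lemma Circuit.ssubset_indep' (hC : M.Circuit C) (hX : X ⊂ C) : M.Indep X := by
  by_contra h
  exact hX.ne (hC.2 X ⟨h, hX.subset.trans hC.1.subset_ground⟩ hX.subset)

lemma Circuit.diff_singleton_indep' (hC : M.Circuit C) (he : e ∈ C) : M.Indep (C \ {e}) :=
  hC.ssubset_indep' (sdiff_singleton_ssubset.mpr he)

lemma Circuit.restrict_circuit (hC : M.Circuit C) (hCR : C ⊆ R) (hR : R ⊆ M.E) :
    (M ↾ R).Circuit C := by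
  refine ⟨restrict_dep_iff.mpr ⟨hC.1.not_indep, hCR⟩, fun P hP hPC => ?_⟩
  rw [restrict_dep_iff] at hP
  exact hC.2 P ⟨hP.1, hP.2.trans hR⟩ hPC

lemma Circuit.delete_circuit (hC : M.Circuit C) (hdj : Disjoint C D) :
    (M.delete' D).Circuit C :=
  hC.restrict_circuit (subset_diff.mpr ⟨hC.1.subset_ground, hdj⟩) diff_subset

lemma Circuit.contract_circuit' (hC : M.Circuit C) (hS : S ⊂ C) :
    (M.contract' S).Circuit (C \ S) := by
  have hSi : M.Indep S := hC.ssubset_indep' hS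
  have hCE := hC.1.subset_ground
  constructor
  · rw [contract_dep_iff' hSi]
    refine ⟨subset_diff.mpr ⟨diff_subset.trans hCE, disjoint_sdiff_left⟩, ?_⟩
    rw [diff_union_of_subset hS.subset]
    exact hC.1.not_indep
  · intro P hP hPC
    by_contra hne
    have hPC' : P ⊂ C \ S := hPC.ssubset_of_ne hne
    obtain ⟨x, hx1, hx2⟩ := exists_of_ssubset hPC'
    have hPS : P ∪ S ⊂ C := by
      rw [ssubset_iff_of_subset (union_subset (hPC.trans diff_subset) hS.subset)]
      exact ⟨x, hx1.1, fun h => h.elim (fun h' => hx2 h') (fun h' => hx1.2 h')⟩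
    rw [contract_dep_iff' hSi] at hP
    exact hP.2 (hC.ssubset_indep' hPS)

lemma Circuit.contract_diff_base (hX : M.Circuit X) (hB : M.IsBase B) (he : e ∈ X)
    (hXB : X \ {e} ⊆ B) : (M.contract' (B \ X)).Circuit X := by
  have hXE := hX.1.subset_ground
  have heB : e ∉ B := by
    intro heB
    refine hX.1.not_indep (hB.indep.subset fun x hx => ?_)
    rcases eq_or_ne x e with rfl | hne
    · exact heB
    · exact hXB ⟨hx, hne⟩
  have hSi : M.Indep (B \ X) := hB.indep.subset diff_subset
  have hdjXS : Disjoint X (B \ X) := disjoint_sdiff_right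
  constructor
  · rw [contract_dep_iff' hSi]
    exact ⟨subset_diff.mpr ⟨hXE, hdjXS⟩,
      fun h => hX.1.not_indep (h.subset subset_union_left)⟩
  · intro P hP hPX
    by_contra hne
    have hPX' : P ⊂ X := hPX.ssubset_of_ne hne
    rw [contract_dep_iff' hSi] at hP
    by_cases heP : e ∈ P
    · obtain ⟨g, hgX, hgP⟩ := exists_of_ssubset hPX'
      have hge : g ≠ e := fun h => hgP (h ▸ heP)
      have hgB : g ∈ B := hXB ⟨hgX, hge⟩
      have hgcl : g ∈ M.closure (X \ {g}) := by
        have hXg : M.Indep (X \ {g}) := hX.diff_singleton_indep' hgX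
        have hdep : M.Dep (insert g (X \ {g})) := by
          rw [insert_diff_singleton, insert_eq_of_mem hgX]; exact hX.1
        exact ((hXg.insert_dep_iff).mp hdep).1
      have hecl : e ∉ M.closure (B \ {g}) := by
        intro hecl
        have h1 : X \ {g} ⊆ insert e (B \ {g}) := by
          rintro x ⟨hx1, hx2⟩
          rcases eq_or_ne x e with rfl | hne
          · exact mem_insert _ _
          · exact mem_insert_iff.mpr (Or.inr ⟨hXB ⟨hx1, hne⟩, hx2⟩)
        have h2 : g ∈ M.closure (insert e (B \ {g})) :=
          M.closure_subset_closure h1 hgcl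
        rw [closure_insert_eq_of_mem_closure hecl] at h2
        exact hB.indep.notMem_closure_diff_of_mem hgB h2
      have hJ : M.Indep (insert e (B \ {g})) := by
        rw [insert_indep_iff]
        exact ⟨hB.indep.subset diff_subset, fun _ => ⟨hXE he, hecl⟩⟩
      have hsub : P ∪ (B \ X) ⊆ insert e (B \ {g}) := by
        rintro x (hxP | ⟨hxB, hxX⟩)
        · rcases eq_or_ne x e with rfl | hne
          · exact mem_insert _ _
          · exact mem_insert_iff.mpr
              (Or.inr ⟨hXB ⟨hPX hxP, hne⟩, fun h => hgP (mem_singleton_iff.mp h ▸ hxP)⟩)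
        · exact mem_insert_iff.mpr
            (Or.inr ⟨hxB, fun h => hxX (mem_singleton_iff.mp h ▸ hgX)⟩)
      exact hP.2 ((hJ.subset hsub))
    · have hsub : P ∪ (B \ X) ⊆ B := union_subset
        (fun x hx => hXB ⟨hPX hx, fun h => heP (mem_singleton_iff.mp h ▸ hx)⟩) diff_subset
      exact hP.2 (hB.indep.subset hsub)

lemma base_contract_diff_base (hB : M.IsBase B) (hIB : I ⊆ B) :
    (M.contract' (B \ I)).IsBase I := by
  rw [contract_base_iff' (hB.indep.subset diff_subset)]
  refine ⟨disjoint_sdiff_right, ?_⟩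
  rwa [union_diff_cancel hIB]

lemma Spanning.spanning_delete (hX : M.Spanning X) (hdj : Disjoint X T) :
    (M.delete' T).Spanning X := by
  obtain ⟨B, hB, hBX⟩ := hX.exists_isBase_subset
  have hXE : X ⊆ M.E \ T := subset_diff.mpr ⟨hX.subset_ground, hdj⟩
  have hsp : M.Spanning (M.E \ T) := hX.superset hXE diff_subset
  show (M ↾ (M.E \ T)).Spanning X
  rw [spanning_iff_exists_isBase_subset (show X ⊆ (M ↾ (M.E \ T)).E from hXE)]
  exact ⟨B, (restrict_base_iff_spanning hsp).mpr ⟨hB, hBX.trans hXE⟩, hBX⟩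

lemma delete_delete' (M : Matroid α) (D₁ D₂ : Set α) :
    (M.delete' D₁).delete' D₂ = M.delete' (D₁ ∪ D₂) := by
  show (M ↾ (M.E \ D₁)) ↾ ((M.E \ D₁) \ D₂) = M ↾ (M.E \ (D₁ ∪ D₂))
  rw [restrict_restrict_eq M diff_subset, diff_diff]

lemma contract_contract' (M : Matroid α) (C₁ C₂ : Set α) :
    (M.contract' C₁).contract' C₂ = M.contract' (C₁ ∪ C₂) := by
  show (((M.contract' C₁)✶).delete' C₂)✶ = (M✶.delete' (C₁ ∪ C₂))✶
  rw [dual_contract', delete_delete']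

lemma delete_contract_comm'' (hS : (M.delete' D).Indep S) :
    (M.delete' D).contract' S = (M.contract' S).delete' D := by
  obtain ⟨hSi, hSE⟩ := delete_indep_iff'.mp hS
  refine ext_indep ?_ fun ⦃I⦄ hI => ?_
  · show (M.E \ D) \ S = (M.E \ S) \ D
    rw [diff_diff_comm]
  · rw [contract_indep_iff' hS, delete_indep_iff', delete_indep_iff',
      contract_indep_iff' hSi, contract_ground']
    constructor
    · rintro ⟨hdj, hIS, hsub⟩
      exact ⟨⟨hdj, hIS⟩, subset_diff.mpr ⟨subset_diff.mpr
        ⟨(subset_union_left.trans hsub).trans (by exact fun x hx => hx.1), hdj⟩,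
        (subset_diff.mp (subset_union_left.trans hsub)).2⟩⟩
    · rintro ⟨⟨hdj, hIS⟩, hsub⟩
      refine ⟨hdj, hIS, union_subset ?_ hSE⟩
      intro x hx
      exact ⟨((hsub hx).1).1, (hsub hx).2⟩

end Matroid

end Helpers

open Matroid in
/-- If a circuit and a cocircuit meet in an odd number `k ≥ 3` of elements, then `M` has
a finite minor of size `2k - 2` in which some set is simultaneously a circuit, a
cocircuit, spanning and cospanning. -/
theorem stmt10 {α : Type*} (M : Matroid α) (C D : Set α)
    (hC : M.Circuit C) (hD : M.Cocircuit D) (hfin : (C ∩ D).Finite)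
    (hodd : Odd (C ∩ D).ncard) (h3 : 3 ≤ (C ∩ D).ncard) :
    ∃ N : Matroid α, N.IsMinor' M ∧ N.E.Finite ∧ N.E.ncard = 2 * (C ∩ D).ncard - 2 ∧
      ∃ Z, N.Circuit Z ∧ N.Cocircuit Z ∧ N.Spanning Z ∧ N✶.Spanning Z := by
  clear hodd
  set X := C ∩ D with hXdef
  obtain ⟨e, heX⟩ : X.Nonempty := by
    rw [nonempty_iff_ne_empty]
    intro h
    rw [h, ncard_empty] at h3
    omega
  have hXC : X ⊆ C := inter_subset_left
  have hXD : X ⊆ D := inter_subset_right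
  have hCE : C ⊆ M.E := hC.1.subset_ground
  have hDE : D ⊆ M.E := hD.1.subset_ground
  -- Step 1 : contract C \ D and delete D \ C; X becomes a circuit and a cocircuit.
  have hCDss : C \ D ⊂ C := ⟨diff_subset, fun h => (h (hXC heX)).2 (hXD heX)⟩
  have h1 : (M.contract' (C \ D)).Circuit X := by
    have h := hC.contract_circuit' hCDss
    rwa [diff_diff_right_self] at h
  set M₁ := (M.contract' (C \ D)).delete' (D \ C) with hM₁
  have hXC1 : M₁.Circuit X :=
    h1.delete_circuit (disjoint_of_subset_left hXC disjoint_sdiff_right)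
  have hXD1 : M₁✶.Circuit X := by
    rw [hM₁, dual_delete', dual_contract']
    have hDCss : D \ C ⊂ D := ⟨diff_subset, fun h => (h (hXD heX)).2 (hXC heX)⟩
    have h2 : (M✶.delete' (C \ D)).Circuit D := hD.delete_circuit disjoint_sdiff_right
    have h3' := h2.contract_circuit' hDCss
    rwa [diff_diff_right_self, inter_comm] at h3'
  -- Step 2 : contract B \ X for a base B of M₁ containing X \ {e}.
  obtain ⟨B, hB, hXB⟩ := (hXC1.diff_singleton_indep' heX).exists_isBase_superset
  have heB : e ∉ B := by
    intro h
    refine hXC1.1.not_indep (hB.indep.subset fun x hx => ?_)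
    rcases eq_or_ne x e with rfl | hne
    · exact h
    · exact hXB ⟨hx, hne⟩
  set M₂ := M₁.contract' (B \ X) with hM₂
  have hXC2 : M₂.Circuit X := hXC1.contract_diff_base hB heX hXB
  have hBXeq : B \ X = B \ (X \ {e}) := by
    ext x
    simp only [Set.mem_diff, Set.mem_singleton_iff]
    constructor
    · rintro ⟨h1', h2'⟩
      exact ⟨h1', fun h3' => h2' h3'.1⟩
    · rintro ⟨h1', h2'⟩
      refine ⟨h1', fun h3' => ?_⟩
      rcases eq_or_ne x e with rfl | hne
      · exact heB h1'
      · exact h2' ⟨h3', hne⟩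
  have hXe_base : M₂.IsBase (X \ {e}) := by
    rw [hM₂, hBXeq]
    exact base_contract_diff_base hB hXB
  have hXM2 : X ⊆ M₂.E := hXC2.1.subset_ground
  have hXsp2 : M₂.Spanning X := hXe_base.spanning.superset diff_subset hXM2
  have hXD2 : M₂✶.Circuit X := by
    rw [hM₂, dual_contract']
    exact hXD1.delete_circuit disjoint_sdiff_right
  -- Step 3 : delete B' \ X for a base B' of M₂✶ containing X \ {e}.
  obtain ⟨B', hB', hXB'⟩ := (hXD2.diff_singleton_indep' heX).exists_isBase_superset
  have heB' : e ∉ B' := by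
    intro h
    refine hXD2.1.not_indep (hB'.indep.subset fun x hx => ?_)
    rcases eq_or_ne x e with rfl | hne
    · exact h
    · exact hXB' ⟨hx, hne⟩
  set N := M₂.delete' (B' \ X) with hNdef
  have hNdual : N✶ = M₂✶.contract' (B' \ X) := dual_delete' _ _
  have hXD3 : N✶.Circuit X := by
    rw [hNdual]
    exact hXD2.contract_diff_base hB' heX hXB'
  have hXC3 : N.Circuit X := hXC2.delete_circuit disjoint_sdiff_right
  have hXsp3 : N.Spanning X := hXsp2.spanning_delete disjoint_sdiff_right
  have hB'Xeq : B' \ X = B' \ (X \ {e}) := by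
    ext x
    simp only [Set.mem_diff, Set.mem_singleton_iff]
    constructor
    · rintro ⟨h1', h2'⟩
      exact ⟨h1', fun h3' => h2' h3'.1⟩
    · rintro ⟨h1', h2'⟩
      refine ⟨h1', fun h3' => ?_⟩
      rcases eq_or_ne x e with rfl | hne
      · exact heB' h1'
      · exact h2' ⟨h3', hne⟩
  have hXe_base' : N✶.IsBase (X \ {e}) := by
    rw [hNdual, hB'Xeq]
    exact base_contract_diff_base hB' hXB'
  have hXsp3' : N✶.Spanning X :=
    hXe_base'.spanning.superset diff_subset hXD3.1.subset_ground
  -- Cardinality computation.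
  have hB'E : B' ⊆ M₂.E := hB'.subset_ground
  have hcompl : M₂.IsBase (M₂.E \ B') := hB'.compl_isBase_of_dual
  have hWfin : (M₂.E \ B').Finite := hXe_base.finite_of_finite hfin.diff hcompl
  have hNE : N.E = X ∪ (M₂.E \ B') := by
    show M₂.E \ (B' \ X) = _
    rw [diff_diff_right, inter_eq_self_of_subset_right hXM2, union_comm]
  have hNEfin : N.E.Finite := by
    rw [hNE]
    exact hfin.union hWfin
  have hcard2 : (M₂.E \ B').ncard = X.ncard - 1 := by
    rw [hcompl.ncard_eq_ncard_of_isBase hXe_base, ncard_diff_singleton_of_mem heX]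
  have hXinter : X ∩ (M₂.E \ B') = {e} := by
    ext x
    simp only [mem_inter_iff, mem_diff, mem_singleton_iff]
    constructor
    · rintro ⟨hxX, -, hxB'⟩
      by_contra hne
      exact hxB' (hXB' ⟨hxX, hne⟩)
    · rintro rfl
      exact ⟨heX, hXM2 heX, heB'⟩
  have hcardN : N.E.ncard = 2 * X.ncard - 2 := by
    have hu := ncard_union_add_ncard_inter X (M₂.E \ B') hfin hWfin
    rw [hXinter, ncard_singleton, hcard2] at hu
    rw [hNE]
    omega
  -- Minor structure.
  have hM1E : M₁.E = (M.E \ (C \ D)) \ (D \ C) := rfl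
  have hM2E : M₂.E = M₁.E \ (B \ X) := rfl
  have hBXM1 : B \ X ⊆ (M.E \ (C \ D)) \ (D \ C) := by
    rw [← hM1E]
    exact diff_subset.trans hB.subset_ground
  have hB'XM2 : B' \ X ⊆ M₁.E \ (B \ X) := by
    rw [← hM2E]
    exact diff_subset.trans hB'E
  have hB'XM1 : B' \ X ⊆ (M.E \ (C \ D)) \ (D \ C) := by
    rw [← hM1E]
    exact hB'XM2.trans diff_subset
  have hdj : Disjoint ((C \ D) ∪ (B \ X)) ((D \ C) ∪ (B' \ X)) := by
    rw [disjoint_union_left, disjoint_union_right, disjoint_union_right]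
    refine ⟨⟨?_, ?_⟩, ?_, ?_⟩
    · exact disjoint_left.mpr fun x hx hx' => hx.2 hx'.1
    · exact ((subset_diff.mp ((subset_diff.mp hB'XM1).1)).2).symm
    · exact (subset_diff.mp hBXM1).2
    · exact ((subset_diff.mp hB'XM2).2).symm
  have hsub : (C \ D) ∪ (B \ X) ∪ ((D \ C) ∪ (B' \ X)) ⊆ M.E := by
    refine union_subset (union_subset (diff_subset.trans hCE) ?_)
      (union_subset (diff_subset.trans hDE) ?_)
    · exact hBXM1.trans (diff_subset.trans diff_subset)
    · exact hB'XM1.trans (diff_subset.trans diff_subset)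
  have hcomm : M₁.contract' (B \ X) =
      ((M.contract' (C \ D)).contract' (B \ X)).delete' (D \ C) := by
    rw [hM₁]
    exact delete_contract_comm'' (hB.indep.subset diff_subset)
  have hNeq : N = (M.contract' ((C \ D) ∪ (B \ X))).delete' ((D \ C) ∪ (B' \ X)) := by
    rw [hNdef, hM₂, hcomm, delete_delete', contract_contract']
  exact ⟨N, ⟨(C \ D) ∪ (B \ X), (D \ C) ∪ (B' \ X), hdj, hsub, hNeq⟩,
    hNEfin, hcardN, X, hXC3, hXD3, hXsp3, hXsp3'⟩
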